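/- Let p > 0, q > e and A > 10⁴ be real numbers such that p ≤ A·log q and q / (log log q) ≤ p·log p. Then p < 2A·log A and q < 3A·(log A)²·(log log A). -/

import Mathlib

set_option maxHeartbeats 4000000

private lemma log_tangent {t a : ℝ} (ht : 0 < t) (ha : 0 < a) :
    Real.log t ≤ Real.log a + (t - a) / a := by
  have h := Real.log_le_sub_one_of_pos (show (0:ℝ) < t / a by positivity)
  rw [Real.log_div ht.ne' ha.ne'] at h
  have h2 : t / a - 1 = (t - a) / a := by field_simp
  rw [h2] at h
  linarith

private lemma log_tangent_mul {t a : ℝ} (ht : 0 < t) (ha : 0 < a) :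
    a * Real.log t ≤ a * Real.log a + (t - a) := by
  have h := mul_le_mul_of_nonneg_left (log_tangent ht ha) ha.le
  have heq : a * (Real.log a + (t - a) / a) = a * Real.log a + (t - a) := by
    field_simp
  rw [heq] at h
  exact h

private lemma log_ub {a : ℝ} {d k : ℕ} (ha : 0 < a) (h : a ^ d < 2 ^ k) :
    (d : ℝ) * Real.log a < (k : ℝ) * Real.log 2 := by
  have := Real.log_lt_log (pow_pos ha d) h
  rwa [Real.log_pow, Real.log_pow] at this

private lemma log_lb {a : ℝ} {d k : ℕ} (h : (2:ℝ) ^ k < a ^ d) :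
    (k : ℝ) * Real.log 2 < (d : ℝ) * Real.log a := by
  have := Real.log_lt_log (by positivity) h
  rwa [Real.log_pow, Real.log_pow] at this

/-- Let `p > 0`, `q > e` and `A > 10⁴` be real numbers with
`p ≤ A log q` and `q / log log q ≤ p log p`.  Then `p < 2A log A` and
`q < 3A (log A)² log log A`. -/
theorem auxiliary_pq_bound (p q A : ℝ) (hp : 0 < p) (hq : Real.exp 1 < q)
    (hA : (10: ℝ) ^ 4 < A)
    (h1 : p ≤ A * Real.log q)
    (h2 : q / Real.log (Real.log q) ≤ p * Real.log p) :
    p < 2 * A * Real.log A ∧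
      q < 3 * A * (Real.log A) ^ 2 * Real.log (Real.log A) := by
  have hl2l := Real.log_two_gt_d9
  have hl2u := Real.log_two_lt_d9
  have hA0 : (0:ℝ) < A := by
    have h10 : (0:ℝ) < 10 ^ 4 := by norm_num
    linarith only [h10, hA]
  have hq0 : (0:ℝ) < q := lt_trans (Real.exp_pos 1) hq
  obtain ⟨x, hxdef⟩ : ∃ r : ℝ, r = Real.log q := ⟨_, rfl⟩
  obtain ⟨y, hydef⟩ : ∃ r : ℝ, r = Real.log x := ⟨_, rfl⟩
  obtain ⟨L, hLdef⟩ : ∃ r : ℝ, r = Real.log A := ⟨_, rfl⟩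
  obtain ⟨M, hMdef⟩ : ∃ r : ℝ, r = Real.log L := ⟨_, rfl⟩
  obtain ⟨m, hmdef⟩ : ∃ r : ℝ, r = Real.log M := ⟨_, rfl⟩
  rw [← hxdef] at h1 h2
  rw [← hydef] at h2
  rw [← hLdef, ← hMdef]
  -- L > 9.2092
  have f1 : (13287 : ℝ) * Real.log 2 < (4000 : ℝ) * Real.log 10 := by
    have := log_lb (a := 10) (d := 4000) (k := 13287) (by rw [show (13287:ℕ) = 129 * 103 from rfl, show (4000:ℕ) = 200 * 20 from rfl, pow_mul, pow_mul]; norm_num)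
    exact_mod_cast this
  have hL : (9.2092 : ℝ) < L := by
    have hlogA : Real.log ((10:ℝ)^4) < L := by
      rw [hLdef]; exact Real.log_lt_log (by norm_num) hA
    rw [show ((10:ℝ)^4) = (10:ℝ)^(4:ℕ) by norm_num, Real.log_pow] at hlogA
    push_cast at hlogA
    linarith only [f1, hlogA, hl2l]
  have hL0 : (0:ℝ) < L := by linarith only [hL]
  -- M > 2.218
  have f2 : (640 : ℝ) * Real.log 2 < (200 : ℝ) * Real.log (23023/2500 : ℝ) := by
    have := log_lb (a := (23023/2500 : ℝ)) (d := 200) (k := 640) (by rw [show (640:ℕ) = 128 * 5 from rfl, pow_mul]; norm_num)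
    exact_mod_cast this
  have hM : (2.218 : ℝ) < M := by
    have h' : Real.log (23023/2500 : ℝ) < M := by
      rw [hMdef]
      refine Real.log_lt_log (by norm_num) ?_
      have : (23023/2500 : ℝ) = 9.2092 := by norm_num
      rw [this]; exact hL
    linarith only [h', f2, hl2l]
  have hM0 : (0:ℝ) < M := by linarith only [hM]
  have hm0 : (0:ℝ) < m := by
    rw [hmdef]; exact Real.log_pos (by linarith only [hM])
  -- tangent upper bound for M at 9.21
  have f3 : (500 : ℝ) * Real.log 9.21 < (1602 : ℝ) * Real.log 2 := by
    have := log_ub (a := (9.21:ℝ)) (d := 500) (k := 1602) (by norm_num) (by rw [show (500:ℕ) = 250 * 2 from rfl, show (1602:ℕ) = 178 * 9 from rfl, pow_mul, pow_mul]; norm_num)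
    exact_mod_cast this
  have hMub : 9.21 * M ≤ 9.21 * 2.22085 + (L - 9.21) := by
    have htan := log_tangent_mul (t := L) (a := 9.21) hL0 (by norm_num)
    rw [← hMdef] at htan
    linarith only [htan, f3, hl2u]
  -- tangent upper bound for m at 2.2204
  have f4 : (500 : ℝ) * Real.log 2.2204 < (576 : ℝ) * Real.log 2 := by
    have := log_ub (a := (2.2204:ℝ)) (d := 500) (k := 576) (by norm_num) (by rw [show (500:ℕ) = 250 * 2 from rfl, show (576:ℕ) = 144 * 4 from rfl, pow_mul, pow_mul]; norm_num)
    exact_mod_cast this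
  have hmub : 2.2204 * m ≤ 2.2204 * 0.79851 + (M - 2.2204) := by
    have htan := log_tangent_mul (t := M) (a := 2.2204) hM0 (by norm_num)
    rw [← hmdef] at htan
    linarith only [htan, f4, hl2u]
  -- log 3 bounds
  have f8 : (792 : ℝ) * Real.log 2 < (500 : ℝ) * Real.log 3 := by
    have := log_lb (a := (3:ℝ)) (d := 500) (k := 792) (by rw [show (792:ℕ) = 198 * 4 from rfl, show (500:ℕ) = 250 * 2 from rfl, pow_mul, pow_mul]; norm_num)
    exact_mod_cast this
  have f9 : (500 : ℝ) * Real.log 3 < (793 : ℝ) * Real.log 2 := by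
    have := log_ub (a := (3:ℝ)) (d := 500) (k := 793) (by norm_num) (by rw [show (500:ℕ) = 250 * 2 from rfl, show (793:ℕ) = 61 * 13 from rfl, pow_mul, pow_mul]; norm_num)
    exact_mod_cast this
  have h3l : (1.09794 : ℝ) < Real.log 3 := by linarith only [f8, hl2l]
  have h3u : Real.log 3 < (1.09934 : ℝ) := by linarith only [f9, hl2u]
  -- small log constants
  have f5 : (500 : ℝ) * Real.log 1.69 < (379 : ℝ) * Real.log 2 := by
    have := log_ub (a := (1.69:ℝ)) (d := 500) (k := 379) (by norm_num) (by rw [show (500:ℕ) = 250 * 2 from rfl, show (379:ℕ) = 189 * 2 + 1 from rfl, pow_succ (2:ℝ) (189 * 2), pow_mul, pow_mul]; norm_num)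
    exact_mod_cast this
  have g1 : Real.log 1.69 < (0.52541 : ℝ) := by linarith only [f5, hl2u]
  have f6 : (500 : ℝ) * Real.log 1.3 < (190 : ℝ) * Real.log 2 := by
    have := log_ub (a := (1.3:ℝ)) (d := 500) (k := 190) (by norm_num) (by rw [show (500:ℕ) = 250 * 2 from rfl, pow_mul]; norm_num)
    exact_mod_cast this
  have g2 : Real.log 1.3 < (0.2634 : ℝ) := by linarith only [f6, hl2u]
  have f7 : (500 : ℝ) * Real.log 1.237 < (154 : ℝ) * Real.log 2 := by
    have := log_ub (a := (1.237:ℝ)) (d := 500) (k := 154) (by norm_num) (by rw [show (500:ℕ) = 250 * 2 from rfl, pow_mul]; norm_num)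
    exact_mod_cast this
  have g3 : Real.log 1.237 < (0.21349 : ℝ) := by linarith only [f7, hl2u]
  -- the quantity s and X
  obtain ⟨s, hsdef⟩ : ∃ r : ℝ, r = 2 * M + m + Real.log 3 := ⟨_, rfl⟩
  obtain ⟨X, hXdef⟩ : ∃ r : ℝ, r = L + s := ⟨_, rfl⟩
  have hs_pos : (0:ℝ) < s := by linarith only [hsdef, hM, hm0, h3l]
  have hs69 : s ≤ 0.69 * L := by linarith only [hsdef, hMub, hmub, h3u, hL]
  have hsL : s ≤ L := by linarith only [hs69, hL0]
  have hX0 : (0:ℝ) < X := by linarith only [hXdef, hL0, hs_pos]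
  have hX9 : (9.2092 : ℝ) < X := by linarith only [hXdef, hL, hs_pos]
  obtain ⟨Y, hYdef⟩ : ∃ r : ℝ, r = Real.log X := ⟨_, rfl⟩
  have hY1 : (1:ℝ) < Y := by
    have he : Real.exp 1 < X := by
      have hd9 := Real.exp_one_lt_d9
      linarith only [hd9, hX9]
    have hlog := Real.log_lt_log (Real.exp_pos 1) he
    rw [Real.log_exp, ← hYdef] at hlog
    exact hlog
  have hY0 : (0:ℝ) < Y := by linarith only [hY1]
  -- Y ≤ M + 0.52541
  have hYub : Y ≤ M + 0.52541 := by
    have h169 : X ≤ 1.69 * L := by linarith only [hXdef, hs69]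
    have hmono : Real.log X ≤ Real.log (1.69 * L) := Real.log_le_log hX0 h169
    rw [Real.log_mul (by norm_num) hL0.ne', ← hYdef, ← hMdef] at hmono
    linarith only [hmono, g1]
  -- log (L + Y) ≤ M + 0.2634
  have hLYub : Real.log (L + Y) ≤ M + 0.2634 := by
    have h13 : L + Y ≤ 1.3 * L := by linarith only [hYub, hMub, hL]
    have hmono : Real.log (L + Y) ≤ Real.log (1.3 * L) :=
      Real.log_le_log (by linarith only [hL0, hY0]) h13
    rw [Real.log_mul (by norm_num) hL0.ne', ← hMdef] at hmono
    linarith only [hmono, g2]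
  -- log Y ≤ m + 0.21349
  have hlYub : Real.log Y ≤ m + 0.21349 := by
    have h1237 : Y ≤ 1.237 * M := by linarith only [hYub, hM]
    have hmono : Real.log Y ≤ Real.log (1.237 * M) := Real.log_le_log hY0 h1237
    rw [Real.log_mul (by norm_num) hM0.ne', ← hmdef] at hmono
    linarith only [hmono, g3]
  -- KEY inequality
  have hKEY : Y + Real.log (L + Y) + Real.log Y < s := by
    linarith only [hsdef, hYub, hLYub, hlYub, h3l]
  -- facts about x, y
  have hx1 : (1:ℝ) < x := by
    have hlog := Real.log_lt_log (Real.exp_pos 1) hq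
    rw [Real.log_exp, ← hxdef] at hlog
    exact hlog
  have hx0 : (0:ℝ) < x := by linarith only [hx1]
  have hy0 : (0:ℝ) < y := by
    rw [hydef]; exact Real.log_pos hx1
  -- log p > 0
  have hplp : (0:ℝ) < p * Real.log p := lt_of_lt_of_le (div_pos hq0 hy0) h2
  have hlp0 : (0:ℝ) < Real.log p := by
    by_contra hcon
    push_neg at hcon
    have hnp : p * Real.log p ≤ 0 := mul_nonpos_iff.mpr (Or.inl ⟨hp.le, hcon⟩)
    linarith only [hnp, hplp]
  -- q ≤ (A x)(L + y) y
  have hAx0 : (0:ℝ) < A * x := by positivity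
  have hlpub : Real.log p ≤ L + y := by
    have hlog := Real.log_le_log hp h1
    rw [Real.log_mul hA0.ne' hx0.ne', ← hLdef, ← hydef] at hlog
    exact hlog
  have hq_le : q ≤ (A * x) * (L + y) * y := by
    have step1 : q ≤ p * Real.log p * y := (div_le_iff₀ hy0).mp h2
    have step2 : p * Real.log p ≤ (A * x) * (L + y) :=
      mul_le_mul h1 hlpub hlp0.le hAx0.le
    calc q ≤ p * Real.log p * y := step1
    _ ≤ (A * x) * (L + y) * y := mul_le_mul_of_nonneg_right step2 hy0.le
  -- x ≤ L + y + log(L+y) + log y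
  have hLy0 : (0:ℝ) < L + y := by linarith only [hL0, hy0]
  have hx_ub : x ≤ L + y + Real.log (L + y) + Real.log y := by
    have hmono : Real.log q ≤ Real.log ((A * x) * (L + y) * y) :=
      Real.log_le_log hq0 hq_le
    rw [Real.log_mul (by positivity) hy0.ne', Real.log_mul hAx0.ne' hLy0.ne',
      Real.log_mul hA0.ne' hx0.ne', ← hxdef, ← hLdef, ← hydef] at hmono
    linarith only [hmono]
  -- main claim: x < X
  have hmain : x < X := by
    by_contra hcon
    push_neg at hcon
    obtain ⟨D, hDdef⟩ : ∃ r : ℝ, r = (x - X) / X := ⟨_, rfl⟩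
    have hD0 : (0:ℝ) ≤ D := by
      rw [hDdef]
      exact div_nonneg (by linarith only [hcon]) hX0.le
    have t1 : y ≤ Y + D := by
      have htan := log_tangent hx0 hX0
      rw [← hydef, ← hYdef, ← hDdef] at htan
      linarith only [htan]
    have t2 : Real.log (L + y) ≤ Real.log (L + Y) + D := by
      have htan := log_tangent (t := L + y) (a := L + Y) hLy0
        (by linarith only [hL0, hY0])
      have hnum : (L + y - (L + Y)) / (L + Y) ≤ D := by
        rcases le_total (y - Y) 0 with h | h
        · have hle : (L + y - (L + Y)) / (L + Y) ≤ 0 :=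
            div_nonpos_of_nonpos_of_nonneg (by linarith only [h])
              (by linarith only [hL0, hY0])
          linarith only [hle, hD0]
        · have hnn : (0:ℝ) ≤ L + y - (L + Y) := by linarith only [h]
          have hdiv : (L + y - (L + Y)) / (L + Y) ≤ L + y - (L + Y) :=
            div_le_self hnn (by linarith only [hL, hY0])
          linarith only [hdiv, t1]
      linarith only [htan, hnum]
    have t3 : Real.log y ≤ Real.log Y + D := by
      have htan := log_tangent (t := y) (a := Y) hy0 hY0
      have hnum : (y - Y) / Y ≤ D := by
        rcases le_total (y - Y) 0 with h | h
        · have hle : (y - Y) / Y ≤ 0 :=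
            div_nonpos_of_nonpos_of_nonneg h hY0.le
          linarith only [hle, hD0]
        · have hdiv : (y - Y) / Y ≤ y - Y := div_le_self h hY1.le
          linarith only [hdiv, t1]
      linarith only [htan, hnum]
    have hcomb : x < X + 3 * D := by
      linarith only [hx_ub, t1, t2, t3, hKEY, hXdef]
    have h3D : 3 * D ≤ x - X := by
      have hprod := mul_le_mul_of_nonneg_left
        (show (3:ℝ) ≤ X by linarith only [hX9])
        (show (0:ℝ) ≤ x - X by linarith only [hcon])
      have heq : 3 * D = 3 * (x - X) / X := by rw [hDdef]; ring
      rw [heq, div_le_iff₀ hX0]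
      linarith only [hprod]
    linarith only [hcomb, h3D]
  constructor
  · -- p < 2 A L
    have hXle : X ≤ 2 * L := by linarith only [hXdef, hsL]
    calc p ≤ A * x := h1
    _ < A * X := mul_lt_mul_of_pos_left hmain hA0
    _ ≤ A * (2 * L) := mul_le_mul_of_nonneg_left hXle hA0.le
    _ = 2 * A * L := by ring
  · -- q < 3 A L² M
    have hq_lt : q < Real.exp X := by
      have hqx : Real.exp x = q := by rw [hxdef]; exact Real.exp_log hq0
      rw [← hqx]
      exact Real.exp_lt_exp.mpr hmain
    have hexpX : Real.exp X = 3 * A * L ^ 2 * M := by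
      have e1 : Real.exp L = A := by rw [hLdef]; exact Real.exp_log hA0
      have e2 : Real.exp M = L := by rw [hMdef]; exact Real.exp_log hL0
      have e3 : Real.exp m = M := by rw [hmdef]; exact Real.exp_log hM0
      have e4 : Real.exp (Real.log 3) = 3 := Real.exp_log (by norm_num)
      rw [hXdef, hsdef, Real.exp_add, Real.exp_add, Real.exp_add,
        show (2:ℝ) * M = M + M by ring, Real.exp_add, e1, e2, e3, e4]
      ring
    rw [hexpX] at hq_lt
    exact hq_lt
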